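/- arXiv:1706.10273 — 2 statements merged into one kernel-verified Lean document; each statement's English description precedes it below -/
import Mathlib

section
/- Let x_k, y_k, z_{kl} be reals in (0,1] for 1 <= k != l <= K, with min_k x_k > max_{k != l} z_{kl} and x_1/y_1 > max_{2<=k<=K} x_k/y_k. Define f(t_1,...,t_K) = [sum_k t_k*(t_k*x_k + sum_{l != k} t_l*z_{kl})] / [sum_k t_k*y_k] on the simplex {t_k >= 0, sum_k t_k = 1}. Then f(t_1,...,t_K) <= f(1,0,...,0) = x_1/y_1 for all t in the simplex. -/
open Finset

/-- Lemma 5(1): under the stated conditions, `f(t₁,…,t_K) ≤ f(1,0,…,0) = x₁/y₁`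
on the simplex. -/
theorem stmt_4 (K : ℕ) [NeZero K] (hK : 2 ≤ K)
    (x y : Fin K → ℝ) (z : Fin K → Fin K → ℝ)
    (hx : ∀ k, 0 < x k ∧ x k ≤ 1) (hy : ∀ k, 0 < y k ∧ y k ≤ 1)
    (hz : ∀ k l, k ≠ l → 0 < z k l ∧ z k l ≤ 1)
    (hratio : ∀ k : Fin K, k ≠ 0 → x k / y k < x 0 / y 0)
    (hxz : ∀ k l m : Fin K, l ≠ m → z l m < x k)
    (f : (Fin K → ℝ) → ℝ)
    (hf : ∀ t, f t = (∑ k, t k * (t k * x k + ∑ l ∈ Finset.univ.erase k, t l * z k l))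
        / (∑ k, t k * y k)) :
    f (fun k => if k = 0 then 1 else 0) = x 0 / y 0
    ∧ ∀ t : Fin K → ℝ, (∀ k, 0 ≤ t k) → (∑ k, t k) = 1 →
        f t ≤ f (fun k => if k = 0 then 1 else 0) := by
  have h1 : f (fun k => if k = 0 then 1 else 0) = x 0 / y 0 := by
    rw [hf]
    congr 1
    · rw [Finset.sum_eq_single 0]
      · simp [Finset.sum_ite_of_false, Finset.mem_erase]
      · intro b _ hb; simp [hb]
      · simp
    · rw [Finset.sum_eq_single 0] <;> simp +contextual
  refine ⟨h1, fun t ht hsum => ?_⟩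
  rw [hf, h1]
  have hD : 0 < ∑ k, t k * y k := by
    have hex : ∃ k, 0 < t k := by
      by_contra h
      push_neg at h
      have : ∑ k, t k = 0 :=
        Finset.sum_eq_zero fun k _ => le_antisymm (h k) (ht k)
      rw [this] at hsum; norm_num at hsum
    obtain ⟨k, hk⟩ := hex
    exact Finset.sum_pos' (fun k _ => mul_nonneg (ht k) (hy k).1.le)
      ⟨k, Finset.mem_univ k, mul_pos hk (hy k).1⟩
  rw [div_le_iff₀ hD]
  have step1 : ∀ k : Fin K, t k * (t k * x k + ∑ l ∈ Finset.univ.erase k, t l * z k l)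
      ≤ t k * x k := by
    intro k
    have hsub : ∑ l ∈ Finset.univ.erase k, t l * z k l
        ≤ ∑ l ∈ Finset.univ.erase k, t l * x k := by
      refine Finset.sum_le_sum fun l hl => ?_
      have hlk : l ≠ k := (Finset.mem_erase.mp hl).1
      exact mul_le_mul_of_nonneg_left (hxz k k l (Ne.symm hlk)).le (ht l)
    have herase : ∑ l ∈ Finset.univ.erase k, t l = 1 - t k := by
      have := Finset.add_sum_erase Finset.univ t (Finset.mem_univ k)
      rw [hsum] at this; linarith
    have hsum2 : ∑ l ∈ Finset.univ.erase k, t l * x k = (1 - t k) * x k := by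
      rw [← Finset.sum_mul, herase]
    have hinner : t k * x k + ∑ l ∈ Finset.univ.erase k, t l * z k l ≤ x k := by
      rw [hsum2] at hsub; nlinarith
    exact mul_le_mul_of_nonneg_left hinner (ht k)
  have step2 : ∀ k : Fin K, t k * x k ≤ t k * ((x 0 / y 0) * y k) := by
    intro k
    refine mul_le_mul_of_nonneg_left ?_ (ht k)
    by_cases hk : k = 0
    · subst hk
      rw [div_mul_eq_mul_div, mul_div_assoc, div_self (hy 0).1.ne', mul_one]
    · exact ((div_lt_iff₀ (hy k).1).mp (hratio k hk)).le
  calc (∑ k, t k * (t k * x k + ∑ l ∈ Finset.univ.erase k, t l * z k l))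
      ≤ ∑ k, t k * x k := Finset.sum_le_sum fun k _ => step1 k
    _ ≤ ∑ k, t k * ((x 0 / y 0) * y k) := Finset.sum_le_sum fun k _ => step2 k
    _ = x 0 / y 0 * ∑ k, t k * y k := by
        rw [Finset.mul_sum]; congr 1; ext k; ring
end

section
/- With the setup and assumptions of the previous statement, for any 0 < t < 1: f(1,0,...,0) - max over the simplex intersected with {t_1 <= 1-t} of f(t_1,...,t_K) >= (1/2) * t * (x_1/y_1 - max_{2<=k<=K} x_k/y_k). -/
set_option maxHeartbeats 1000000


open Finset

/-- Lemma 5(2): under the stated conditions, for any `0 < t < 1`,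
`f(1,0,…,0) - max_{t₁ ≤ 1-t} f(t₁,…,t_K) ≥ (1/2) t (x₁/y₁ - max_{k≥2} x_k/y_k)`. -/
theorem stmt_5 (K : ℕ) [NeZero K] (hK : 2 ≤ K)
    (x y : Fin K → ℝ) (z : Fin K → Fin K → ℝ)
    (hx : ∀ k, 0 < x k ∧ x k ≤ 1) (hy : ∀ k, 0 < y k ∧ y k ≤ 1)
    (hz : ∀ k l, k ≠ l → 0 < z k l ∧ z k l ≤ 1)
    (hratio : ∀ k : Fin K, k ≠ 0 → x k / y k < x 0 / y 0)
    (hxz : ∀ k l m : Fin K, l ≠ m → z l m < x k)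
    (f : (Fin K → ℝ) → ℝ)
    (hf : ∀ s, f s = (∑ k, s k * (s k * x k + ∑ l ∈ Finset.univ.erase k, s l * z k l))
        / (∑ k, s k * y k))
    (t : ℝ) (ht0 : 0 < t) (ht1 : t < 1) :
    ∀ s : Fin K → ℝ, (∀ k, 0 ≤ s k) → (∑ k, s k) = 1 → s 0 ≤ 1 - t →
      f (fun k => if k = 0 then 1 else 0) - f s
        ≥ (1 / 2) * t *
          (x 0 / y 0 -
            (Finset.univ.erase (0 : Fin K)).sup'
              ⟨⟨1, by omega⟩, by simp [Finset.mem_erase, Fin.ext_iff]⟩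
              (fun k => x k / y k)) := by
  intro s hs hsum hs0
  have ne : (Finset.univ.erase (0 : Fin K)).Nonempty :=
    ⟨⟨1, by omega⟩, by simp [Finset.mem_erase, Fin.ext_iff]⟩
  set M : ℝ := (Finset.univ.erase (0 : Fin K)).sup' ne (fun k => x k / y k) with hMdef
  show f (fun k => if k = 0 then 1 else 0) - f s ≥ 1 / 2 * t * (x 0 / y 0 - M)
  have hy0 : 0 < y 0 := (hy 0).1
  have hx0 : 0 < x 0 := (hx 0).1
  have hr0 : (x 0 / y 0) * y 0 = x 0 := div_mul_cancel₀ _ hy0.ne'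
  have hMlt : M < x 0 / y 0 := by
    rw [hMdef]
    exact (Finset.sup'_lt_iff ne).mpr fun k hk => hratio k (Finset.mem_erase.mp hk).1
  have hrM : 0 ≤ x 0 / y 0 - M := by linarith
  have hMk : ∀ k : Fin K, k ≠ 0 → x k ≤ M * y k := by
    intro k hk
    have h1 : x k / y k ≤ M :=
      hMdef ▸ Finset.le_sup' (fun k => x k / y k)
        (Finset.mem_erase.mpr ⟨hk, Finset.mem_univ k⟩)
    exact (div_le_iff₀ (hy k).1).mp h1
  clear_value M
  have hs0' : 0 ≤ s 0 := hs 0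
  have hs0le : s 0 ≤ 1 := by
    have h := Finset.single_le_sum (f := s) (fun k _ => hs k) (Finset.mem_univ 0)
    rw [hsum] at h; exact h
  have hσ : (∑ k ∈ Finset.univ.erase (0 : Fin K), s k) + s 0 = 1 :=
    (Finset.sum_erase_add _ _ (Finset.mem_univ 0)).trans hsum
  have hσt : t ≤ ∑ k ∈ Finset.univ.erase (0 : Fin K), s k := by linarith
  have hDsplit : (∑ k ∈ Finset.univ.erase (0 : Fin K), s k * y k) + s 0 * y 0
      = ∑ k, s k * y k := Finset.sum_erase_add _ _ (Finset.mem_univ 0)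
  have hD_pos : 0 < ∑ k, s k * y k := by
    rcases (Finset.sum_nonneg fun k _ => mul_nonneg (hs k) (hy k).1.le).lt_or_eq with h | h
    · exact h
    · exfalso
      have h0 : ∀ k ∈ Finset.univ, s k * y k = 0 :=
        (Finset.sum_eq_zero_iff_of_nonneg fun k _ =>
          mul_nonneg (hs k) (hy k).1.le).mp h.symm
      have hz0 : ∀ k, s k = 0 := by
        intro k
        rcases mul_eq_zero.mp (h0 k (Finset.mem_univ k)) with h' | h'
        · exact h'
        · exact absurd h' (hy k).1.ne'
      simp [hz0] at hsum
  -- value at the vertex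
  have he0 : f (fun k => if k = 0 then (1:ℝ) else 0) = x 0 / y 0 := by
    rw [hf]
    have hden : (∑ k, (if k = (0 : Fin K) then (1:ℝ) else 0) * y k) = y 0 := by
      simp
    have hnum : (∑ k, (if k = (0 : Fin K) then (1:ℝ) else 0) *
        ((if k = (0 : Fin K) then (1:ℝ) else 0) * x k +
          ∑ l ∈ Finset.univ.erase k, (if l = (0 : Fin K) then (1:ℝ) else 0) * z k l)) = x 0 := by
      rw [Finset.sum_eq_single (0 : Fin K)]
      · have : (∑ l ∈ Finset.univ.erase (0 : Fin K),
            (if l = (0 : Fin K) then (1:ℝ) else 0) * z 0 l) = 0 := by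
          apply Finset.sum_eq_zero
          intro l hl
          rw [if_neg (Finset.mem_erase.mp hl).1, zero_mul]
        simp [this]
      · intro k _ hk; rw [if_neg hk, zero_mul]
      · intro h; exact absurd (Finset.mem_univ 0) h
    rw [hnum, hden]
  -- per-index claim for key2
  have claimk : ∀ k ∈ Finset.univ.erase (0 : Fin K),
      1/2 * (x 0 / y 0 - M) * (s 0 * y 0) * s k ≤
        1/2 * (x 0 / y 0 - M) * (s k * y k)
          + s 0 * (s k * ((x 0 - z 0 k) + (x k - z k 0))) := by
    intro k hk
    have hk0 : k ≠ 0 := (Finset.mem_erase.mp hk).1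
    have hyk : 0 < y k := (hy k).1
    have hxk : 0 < x k := (hx k).1
    have hz1 : z 0 k ≤ x k := (hxz k 0 k (Ne.symm hk0)).le
    have hz2 : z k 0 ≤ x k := (hxz k k 0 hk0).le
    have hz3 : z 0 k ≤ x 0 := (hxz 0 0 k (Ne.symm hk0)).le
    have hMyk : x k ≤ M * y k := hMk k hk0
    have hsk : 0 ≤ s k := hs k
    have hin : 1/2 * (x 0 / y 0 - M) * (s 0 * y 0) ≤
        1/2 * (x 0 / y 0 - M) * y k + s 0 * ((x 0 - z 0 k) + (x k - z k 0)) := by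
      rcases le_or_gt (s 0 * y 0) (y k) with h | h
      · nlinarith [mul_nonneg hrM (sub_nonneg.mpr h),
          mul_nonneg hs0' (by linarith : (0:ℝ) ≤ (x 0 - z 0 k) + (x k - z k 0))]
      · have hyy : y k < y 0 := by nlinarith
        have hxx : x k * y 0 < x 0 * y k := (div_lt_div_iff₀ hyk hy0).mp (hratio k hk0)
        have hkey : (x 0 / y 0 - M) * y 0 ≤ x 0 - x k := by
          have e2 : x k * y 0 ≤ M * y k * y 0 := mul_le_mul_of_nonneg_right hMyk hy0.le
          have e3 : x k * y k ≤ x k * y 0 := by nlinarith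
          have h1' : (x 0 / y 0 - M) * y 0 = x 0 - M * y 0 := by rw [sub_mul, hr0]
          have h1 : (x 0 / y 0 - M) * y 0 * y k ≤ (x 0 - x k) * y k := by
            rw [h1']; nlinarith
          exact le_of_mul_le_mul_right h1 hyk
        nlinarith [mul_nonneg hs0'
            (by linarith : (0:ℝ) ≤ ((x 0 - z 0 k) + (x k - z k 0)) - (x 0 - x k)),
          mul_nonneg hs0' (by linarith : (0:ℝ) ≤ (x 0 - x k) - (x 0 / y 0 - M) * y 0),
          mul_nonneg (mul_nonneg hs0' hrM) hy0.le,
          mul_nonneg hrM hyk.le]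
    nlinarith [mul_le_mul_of_nonneg_right hin hsk]
  -- key1 : termwise bound of the numerator
  have hterm : ∀ k : Fin K,
      s k * (s k * x k + ∑ l ∈ Finset.univ.erase k, s l * z k l)
        + (if k = 0 then
            s 0 * (∑ l ∈ Finset.univ.erase (0 : Fin K), s l * (x 0 - z 0 l))
          else (x 0 / y 0 - M) * (s k * y k) + s 0 * (s k * (x k - z k 0)))
        ≤ s k * ((x 0 / y 0) * y k) := by
    intro k
    by_cases hk : k = 0
    · subst hk
      rw [if_pos rfl, hr0]
      have hsplit : (∑ l ∈ Finset.univ.erase (0 : Fin K), s l * z 0 l)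
          + (∑ l ∈ Finset.univ.erase (0 : Fin K), s l * (x 0 - z 0 l))
          = (∑ l ∈ Finset.univ.erase (0 : Fin K), s l) * x 0 := by
        rw [← Finset.sum_add_distrib, Finset.sum_mul]
        exact Finset.sum_congr rfl fun l _ => by ring
      have hs1 : (∑ l ∈ Finset.univ.erase (0 : Fin K), s l) = 1 - s 0 := by linarith
      rw [hs1] at hsplit
      nlinarith [mul_le_mul_of_nonneg_left (le_of_eq hsplit) hs0',
        mul_le_mul_of_nonneg_left (ge_of_eq hsplit) hs0']
    · rw [if_neg hk]
      have h0mem : (0 : Fin K) ∈ Finset.univ.erase k :=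
        Finset.mem_erase.mpr ⟨Ne.symm hk, Finset.mem_univ 0⟩
      have hsub : s 0 * (x k - z k 0) ≤ ∑ l ∈ Finset.univ.erase k, s l * (x k - z k l) :=
        Finset.single_le_sum (f := fun l => s l * (x k - z k l))
          (fun l hl => mul_nonneg (hs l)
            (sub_nonneg.mpr (hxz k k l (Ne.symm (Finset.mem_erase.mp hl).1)).le)) h0mem
      have hsplit2 : (∑ l ∈ Finset.univ.erase k, s l * (x k - z k l))
          = (∑ l ∈ Finset.univ.erase k, s l) * x k
            - ∑ l ∈ Finset.univ.erase k, s l * z k l := by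
        rw [Finset.sum_mul, ← Finset.sum_sub_distrib]
        exact Finset.sum_congr rfl fun l _ => by ring
      have hsk1 : (∑ l ∈ Finset.univ.erase k, s l) = 1 - s k := by
        have h := Finset.sum_erase_add Finset.univ s (Finset.mem_univ k)
        rw [hsum] at h; linarith
      rw [hsplit2, hsk1] at hsub
      have hMyk : x k ≤ M * y k := hMk k hk
      have hSz : (∑ l ∈ Finset.univ.erase k, s l * z k l) + s 0 * (x k - z k 0)
          ≤ (1 - s k) * x k := by linarith
      nlinarith [mul_le_mul_of_nonneg_left hSz (hs k),
        mul_le_mul_of_nonneg_left hMyk (hs k)]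
  have hTotal : (∑ k, (s k * (s k * x k + ∑ l ∈ Finset.univ.erase k, s l * z k l)
        + (if k = 0 then
            s 0 * (∑ l ∈ Finset.univ.erase (0 : Fin K), s l * (x 0 - z 0 l))
          else (x 0 / y 0 - M) * (s k * y k) + s 0 * (s k * (x k - z k 0)))))
      ≤ ∑ k, s k * ((x 0 / y 0) * y k) :=
    Finset.sum_le_sum fun k _ => hterm k
  rw [Finset.sum_add_distrib] at hTotal
  have hRHS : (∑ k, s k * ((x 0 / y 0) * y k)) = (x 0 / y 0) * ∑ k, s k * y k := by
    rw [Finset.mul_sum]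
    exact Finset.sum_congr rfl fun k _ => by ring
  have hg : (∑ k, (if k = 0 then
        s 0 * (∑ l ∈ Finset.univ.erase (0 : Fin K), s l * (x 0 - z 0 l))
      else (x 0 / y 0 - M) * (s k * y k) + s 0 * (s k * (x k - z k 0))))
      = ((x 0 / y 0 - M) * (∑ k ∈ Finset.univ.erase (0 : Fin K), s k * y k)
          + s 0 * (∑ k ∈ Finset.univ.erase (0 : Fin K), s k * (x k - z k 0)))
        + s 0 * (∑ l ∈ Finset.univ.erase (0 : Fin K), s l * (x 0 - z 0 l)) := by
    rw [← Finset.sum_erase_add Finset.univ _ (Finset.mem_univ (0 : Fin K)), if_pos rfl]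
    congr 1
    rw [Finset.sum_congr rfl (fun k hk => if_neg (Finset.mem_erase.mp hk).1),
      Finset.sum_add_distrib, ← Finset.mul_sum, ← Finset.mul_sum]
  rw [hg, hRHS] at hTotal
  -- key2
  have hA0 : 0 ≤ ∑ k ∈ Finset.univ.erase (0 : Fin K), s k * y k :=
    Finset.sum_nonneg fun k _ => mul_nonneg (hs k) (hy k).1.le
  have hclaim : (∑ k ∈ Finset.univ.erase (0 : Fin K),
        1/2 * (x 0 / y 0 - M) * (s 0 * y 0) * s k)
      ≤ ∑ k ∈ Finset.univ.erase (0 : Fin K),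
        (1/2 * (x 0 / y 0 - M) * (s k * y k)
          + s 0 * (s k * ((x 0 - z 0 k) + (x k - z k 0)))) :=
    Finset.sum_le_sum claimk
  rw [← Finset.mul_sum, Finset.sum_add_distrib, ← Finset.mul_sum, ← Finset.mul_sum] at hclaim
  have hBq : (∑ k ∈ Finset.univ.erase (0 : Fin K), s k * ((x 0 - z 0 k) + (x k - z k 0)))
      = (∑ k ∈ Finset.univ.erase (0 : Fin K), s k * (x 0 - z 0 k))
        + ∑ k ∈ Finset.univ.erase (0 : Fin K), s k * (x k - z k 0) := by
    rw [← Finset.sum_add_distrib]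
    exact Finset.sum_congr rfl fun k _ => by ring
  rw [hBq] at hclaim
  have hBq1 : (∑ k ∈ Finset.univ.erase (0 : Fin K), s k * (x 0 - z 0 k))
      = ∑ l ∈ Finset.univ.erase (0 : Fin K), s l * (x 0 - z 0 l) := rfl
  have key2 : 1/2 * t * (x 0 / y 0 - M) * (∑ k, s k * y k)
      ≤ ((x 0 / y 0 - M) * (∑ k ∈ Finset.univ.erase (0 : Fin K), s k * y k)
          + s 0 * (∑ k ∈ Finset.univ.erase (0 : Fin K), s k * (x k - z k 0)))
        + s 0 * (∑ l ∈ Finset.univ.erase (0 : Fin K), s l * (x 0 - z 0 l)) := by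
    rw [← hDsplit]
    have hQ : 0 ≤ (x 0 / y 0 - M) * (s 0 * y 0) :=
      mul_nonneg hrM (mul_nonneg hs0' hy0.le)
    nlinarith [hclaim, mul_nonneg hrM hA0,
      mul_nonneg (sub_nonneg.mpr hσt) hQ,
      mul_nonneg (by linarith : (0:ℝ) ≤ 1 - t) (mul_nonneg hrM hA0)]
  have hNle : (∑ k, s k * (s k * x k + ∑ l ∈ Finset.univ.erase k, s l * z k l))
      ≤ (x 0 / y 0 - 1/2 * t * (x 0 / y 0 - M)) * (∑ k, s k * y k) := by
    nlinarith [hTotal, key2]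
  have hfs : f s ≤ x 0 / y 0 - 1/2 * t * (x 0 / y 0 - M) := by
    rw [hf s, div_le_iff₀ hD_pos]
    exact hNle
  rw [ge_iff_le, he0]
  linarith
end
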